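/- Let Ω ⊂ ℝⁿ be a bounded convex domain, x₀ ∈ ∂Ω, and let V be an open cone with vertex x₀ such that Ω ⊆ V, with V − x₀ contained in a wedge {(r cos θ, r sin θ, x₃, …, x_n) : r > 0, θ ∈ (0, μπ)} for some μ ∈ (0,1) (after a rotation). Let f be the solution of the minimal graph equation in Ω and f_V the solution of the minimal graph equation in V. Then f(x) ≤ f_V(x) for all x ∈ Ω; in particular, writing f_V(x) = |x − x₀| g_V((x−x₀)/|x−x₀|), one has f(x) ≤ |x − x₀| g_V((x−x₀)/|x−x₀|) for all x ∈ Ω. -/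

import Mathlib

open scoped BigOperators RealInnerProductSpace
open Metric Filter Topology

noncomputable section

/-- The partial derivative `∂_i f` at `x`. -/
def pd (n : ℕ) (f : EuclideanSpace ℝ (Fin n) → ℝ) (i : Fin n)
    (x : EuclideanSpace ℝ (Fin n)) : ℝ :=
  fderiv ℝ f x (EuclideanSpace.single i 1)

/-- The second partial derivative `∂_{ij} f` at `x`. -/
def pd2 (n : ℕ) (f : EuclideanSpace ℝ (Fin n) → ℝ) (i j : Fin n)
    (x : EuclideanSpace ℝ (Fin n)) : ℝ :=
  pd n (pd n f i) j x

/-- The minimal graph equation `Δf − (∂_i f ∂_j f ∂_{ij} f)/(1+|∇f|²) + n/f = 0` at `x`. -/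
def MinGraphEq (n : ℕ) (f : EuclideanSpace ℝ (Fin n) → ℝ)
    (x : EuclideanSpace ℝ (Fin n)) : Prop :=
  (∑ i, pd2 n f i i x)
    - (∑ i, ∑ j, pd n f i x * pd n f j x * pd2 n f i j x) / (1 + ∑ i, (pd n f i x) ^ 2)
    + (n : ℝ) / f x = 0

/-- `f` is a solution of the minimal graph equation in `Ω`:
`f ∈ C(cl Ω) ∩ C^∞(Ω)`, `f > 0` in `Ω`, `f = 0` on `∂Ω`, and the PDE holds in `Ω`. -/
def IsMinSol (n : ℕ) (Ω : Set (EuclideanSpace ℝ (Fin n)))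
    (f : EuclideanSpace ℝ (Fin n) → ℝ) : Prop :=
  ContinuousOn f (closure Ω) ∧ ContDiffOn ℝ (⊤ : ℕ∞) f Ω ∧ (∀ x ∈ Ω, 0 < f x) ∧
    (∀ x ∈ frontier Ω, f x = 0) ∧ ∀ x ∈ Ω, MinGraphEq n f x

/-- The planar wedge `{x : (x₁,x₂) = (r cos θ, r sin θ), r > 0, θ ∈ (0, μπ)} ⊂ ℝⁿ`. -/
def wedge (n : ℕ) (hn : 2 ≤ n) (μ : ℝ) : Set (EuclideanSpace ℝ (Fin n)) :=
  {x | ∃ r : ℝ, 0 < r ∧ ∃ θ ∈ Set.Ioo 0 (μ * Real.pi),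
      x ⟨0, by omega⟩ = r * Real.cos θ ∧ x ⟨1, by omega⟩ = r * Real.sin θ}

open Set
open scoped RealInnerProductSpace

lemma secondDerivTestMax {g g' : ℝ → ℝ} {c : ℝ}
    (hg : ∀ᶠ t in 𝓝 (0:ℝ), HasDerivAt g (g' t) t)
    (hg' : HasDerivAt g' c 0)
    (hmax : IsLocalMax g 0) : c ≤ 0 := by
  by_contra hc
  push_neg at hc
  have h0 : g' 0 = 0 := by
    have h1 : deriv g 0 = g' 0 := hg.self_of_nhds.deriv
    rw [← h1, hmax.deriv_eq_zero]
  have hslope : Tendsto (fun t => g' t / t) (𝓝[>] (0:ℝ)) (𝓝 c) := by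
    have := hasDerivAt_iff_tendsto_slope.1 hg'
    have h2 : Tendsto (slope g' 0) (𝓝[>] (0:ℝ)) (𝓝 c) :=
      this.mono_left (nhdsWithin_mono _ (fun t ht => ne_of_gt ht))
    refine h2.congr (fun t => ?_)
    simp [slope, h0, div_eq_inv_mul]
  have hpos : ∀ᶠ t in 𝓝[>] (0:ℝ), 0 < g' t := by
    have h3 : ∀ᶠ t in 𝓝[>] (0:ℝ), 0 < g' t / t :=
      hslope.eventually (eventually_gt_nhds hc)
    filter_upwards [h3, self_mem_nhdsWithin] with t ht ht'
    have := mul_pos ht (ht' : (0:ℝ) < t)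
    rwa [div_mul_cancel₀ _ (ne_of_gt ht')] at this
  -- extract intervals
  obtain ⟨u, hu, hIoo⟩ := mem_nhdsGT_iff_exists_Ioo_subset.1 hpos
  obtain ⟨ε₁, hε₁, hball₁⟩ := Metric.eventually_nhds_iff.1 hg
  obtain ⟨ε₂, hε₂, hball₂⟩ := Metric.eventually_nhds_iff.1 hmax
  set t₁ : ℝ := min (min ε₁ ε₂) u / 2 with ht₁def
  have hu0 : (0:ℝ) < u := hu
  have ht₁pos : 0 < t₁ := by positivity
  have ht₁u : t₁ < u := by
    have : min (min ε₁ ε₂) u ≤ u := min_le_right _ _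
    linarith
  have ht₁ε₁ : t₁ < ε₁ := by
    have h := min_le_left ε₁ ε₂
    have : min (min ε₁ ε₂) u ≤ min ε₁ ε₂ := min_le_left _ _
    linarith
  have ht₁ε₂ : t₁ < ε₂ := by
    have h := min_le_right ε₁ ε₂
    have : min (min ε₁ ε₂) u ≤ min ε₁ ε₂ := min_le_left _ _
    linarith
  have hder : ∀ t ∈ Icc (0:ℝ) t₁, HasDerivAt g (g' t) t := by
    intro t ht
    refine hball₁ ?_
    have : |t| < ε₁ := by
      rw [abs_of_nonneg ht.1]; linarith [ht.2]
    simpa [Real.dist_eq] using this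
  have hmono : StrictMonoOn g (Icc (0:ℝ) t₁) := by
    refine strictMonoOn_of_deriv_pos (convex_Icc _ _) ?_ ?_
    · exact fun t ht => (hder t ht).continuousAt.continuousWithinAt
    · intro t ht
      rw [interior_Icc] at ht
      rw [(hder t ⟨ht.1.le, ht.2.le⟩).deriv]
      exact hIoo ⟨ht.1, lt_trans ht.2 ht₁u⟩
  have hlt : g 0 < g t₁ :=
    hmono (left_mem_Icc.2 ht₁pos.le) (right_mem_Icc.2 ht₁pos.le) ht₁pos
  have hle : g t₁ ≤ g 0 := by
    refine hball₂ ?_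
    have : |t₁| < ε₂ := by rw [abs_of_nonneg ht₁pos.le]; exact ht₁ε₂
    simpa [Real.dist_eq] using this
  linarith



lemma hasFDerivAt_fderiv_apply {U : Set (EuclideanSpace ℝ (Fin n))} (hU : IsOpen U)
    {h : EuclideanSpace ℝ (Fin n) → ℝ} (hh : ContDiffOn ℝ (⊤:ℕ∞) h U)
    {z : EuclideanSpace ℝ (Fin n)} (hz : z ∈ U) (w : EuclideanSpace ℝ (Fin n)) :
    HasFDerivAt (fun x => fderiv ℝ h x w)
      ((ContinuousLinearMap.apply ℝ ℝ w).comp (fderiv ℝ (fderiv ℝ h) z)) z := by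
  have hct : ContDiffAt ℝ (⊤:ℕ∞) h z := hh.contDiffAt (hU.mem_nhds hz)
  have hF : DifferentiableAt ℝ (fderiv ℝ h) z := by
    have : ContDiffAt ℝ (1:ℕ∞) (fderiv ℝ h) z := hct.fderiv_right (by exact_mod_cast le_top)
    exact this.differentiableAt (by simp)
  exact ((ContinuousLinearMap.apply ℝ ℝ w).hasFDerivAt).comp z hF.hasFDerivAt

lemma hess_nonpos {U : Set (EuclideanSpace ℝ (Fin n))} (hU : IsOpen U)
    {h : EuclideanSpace ℝ (Fin n) → ℝ} (hh : ContDiffOn ℝ (⊤:ℕ∞) h U)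
    {z : EuclideanSpace ℝ (Fin n)} (hz : z ∈ U) (hmax : IsLocalMax h z)
    (v : EuclideanSpace ℝ (Fin n)) :
    (fderiv ℝ (fderiv ℝ h) z v) v ≤ 0 := by
  set line : ℝ → EuclideanSpace ℝ (Fin n) := fun t => z + t • v with hline
  have hlinec : Continuous line := by fun_prop
  have hline0 : line 0 = z := by simp [hline]
  have hlined : ∀ t : ℝ, HasDerivAt line v t := by
    intro t
    simpa [hline] using ((hasDerivAt_id t).smul_const v).const_add z
  have hs : {t : ℝ | line t ∈ U} ∈ 𝓝 (0:ℝ) := by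
    have : IsOpen {t : ℝ | line t ∈ U} := hU.preimage hlinec
    exact this.mem_nhds (by simp [hline0, hz])
  set g : ℝ → ℝ := fun t => h (line t) with hgdef
  set g' : ℝ → ℝ := fun t => fderiv ℝ h (line t) v with hg'def
  have hg : ∀ᶠ t in 𝓝 (0:ℝ), HasDerivAt g (g' t) t := by
    filter_upwards [hs] with t ht
    have hdiff : DifferentiableAt ℝ h (line t) :=
      (hh.contDiffAt (hU.mem_nhds ht)).differentiableAt (by simp)
    exact hdiff.hasFDerivAt.comp_hasDerivAt t (hlined t)
  have hg' : HasDerivAt g' ((fderiv ℝ (fderiv ℝ h) z v) v) 0 := by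
    have h1 := hasFDerivAt_fderiv_apply hU hh hz v
    have h2 := (hline0 ▸ h1).comp_hasDerivAt 0 (hlined 0)
    rw [hline0] at h2
    exact h2
  have hgm : IsLocalMax g 0 := by
    have : Tendsto line (𝓝 0) (𝓝 z) := by
      rw [← hline0]; exact hlinec.continuousAt
    have := this.eventually hmax
    filter_upwards [this] with t ht
    simpa [hgdef, hline0] using ht
  exact secondDerivTestMax hg hg' hgm


lemma euclid_sum_single (x : EuclideanSpace ℝ (Fin n)) :
    ∑ i, x i • EuclideanSpace.single i (1:ℝ) = x := by
  have := (EuclideanSpace.basisFun (Fin n) ℝ).sum_repr x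
  simpa [EuclideanSpace.basisFun_apply, EuclideanSpace.basisFun_repr] using this

lemma bilin_expand (B : EuclideanSpace ℝ (Fin n) →L[ℝ] EuclideanSpace ℝ (Fin n) →L[ℝ] ℝ)
    (x y : EuclideanSpace ℝ (Fin n)) :
    B x y = ∑ i, ∑ j, x i * y j *
      (B (EuclideanSpace.single i (1:ℝ)) (EuclideanSpace.single j (1:ℝ))) := by
  have hx : ∀ (L : EuclideanSpace ℝ (Fin n) →L[ℝ] ℝ) (w : EuclideanSpace ℝ (Fin n)),
      L w = ∑ j, w j * L (EuclideanSpace.single j (1:ℝ)) := by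
    intro L w
    conv_lhs => rw [← euclid_sum_single w]
    rw [map_sum]
    exact Finset.sum_congr rfl fun j _ => by rw [map_smul, smul_eq_mul]
  calc B x y = ∑ i, x i * (B (EuclideanSpace.single i (1:ℝ)) y) := by
        conv_lhs => rw [← euclid_sum_single x]
        rw [map_sum, ContinuousLinearMap.sum_apply]
        exact Finset.sum_congr rfl fun i _ => by
          rw [map_smul, ContinuousLinearMap.smul_apply, smul_eq_mul]
    _ = ∑ i, ∑ j, x i * y j *
          (B (EuclideanSpace.single i (1:ℝ)) (EuclideanSpace.single j (1:ℝ))) := by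
        refine Finset.sum_congr rfl fun i _ => ?_
        rw [hx (B (EuclideanSpace.single i (1:ℝ))) y, Finset.mul_sum]
        exact Finset.sum_congr rfl fun j _ => by ring

lemma trace_eq_onb (B : EuclideanSpace ℝ (Fin n) →L[ℝ] EuclideanSpace ℝ (Fin n) →L[ℝ] ℝ)
    (b : OrthonormalBasis (Fin n) ℝ (EuclideanSpace ℝ (Fin n))) :
    ∑ k, B (b k) (b k)
      = ∑ i, B (EuclideanSpace.single i (1:ℝ)) (EuclideanSpace.single i (1:ℝ)) := by
  have key : ∀ i j : Fin n, ∑ k, (b k) i * (b k) j = if i = j then 1 else 0 := by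
    intro i j
    have h1 := b.sum_inner_mul_inner (EuclideanSpace.single i (1:ℝ))
      (EuclideanSpace.single j (1:ℝ))
    have h2 : ∀ k, ⟪EuclideanSpace.single i (1:ℝ), b k⟫ = (b k) i := by
      intro k; rw [real_inner_comm]; simp [EuclideanSpace.inner_single_right]
    have h3 : ∀ k, ⟪b k, EuclideanSpace.single j (1:ℝ)⟫ = (b k) j := by
      intro k; simp [EuclideanSpace.inner_single_right]
    have h4 : ⟪EuclideanSpace.single i (1:ℝ), EuclideanSpace.single j (1:ℝ)⟫
        = if i = j then (1:ℝ) else 0 := by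
      simp [EuclideanSpace.inner_single_right, EuclideanSpace.single_apply, eq_comm]
    simp only [h2, h3, h4] at h1
    exact h1
  calc ∑ k, B (b k) (b k)
      = ∑ k, ∑ i, ∑ j, (b k) i * (b k) j *
          (B (EuclideanSpace.single i (1:ℝ)) (EuclideanSpace.single j (1:ℝ))) := by
        exact Finset.sum_congr rfl (fun k _ => bilin_expand B (b k) (b k))
    _ = ∑ i, ∑ j, (∑ k, (b k) i * (b k) j) *
          (B (EuclideanSpace.single i (1:ℝ)) (EuclideanSpace.single j (1:ℝ))) := by
        rw [Finset.sum_comm]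
        refine Finset.sum_congr rfl (fun i _ => ?_)
        rw [Finset.sum_comm]
        refine Finset.sum_congr rfl (fun j _ => ?_)
        rw [Finset.sum_mul]
    _ = ∑ i, B (EuclideanSpace.single i (1:ℝ)) (EuclideanSpace.single i (1:ℝ)) := by
        refine Finset.sum_congr rfl (fun i _ => ?_)
        rw [Finset.sum_eq_single i]
        · rw [key i i]; simp
        · intro j _ hj; rw [key i j]; simp [Ne.symm hj]
        · intro hi; exact absurd (Finset.mem_univ i) hi


lemma euclid_sum_single' (x : EuclideanSpace ℝ (Fin n)) :
    ∑ i, x i • EuclideanSpace.single i (1:ℝ) = x := by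
  have := (EuclideanSpace.basisFun (Fin n) ℝ).sum_repr x
  simpa [EuclideanSpace.basisFun_apply, EuclideanSpace.basisFun_repr] using this

lemma exists_onb_with (hn : 0 < n) {u : EuclideanSpace ℝ (Fin n)} (hu : ‖u‖ = 1) :
    ∃ b : OrthonormalBasis (Fin n) ℝ (EuclideanSpace ℝ (Fin n)), b ⟨0, hn⟩ = u := by
  have card : Module.finrank ℝ (EuclideanSpace ℝ (Fin n)) = Fintype.card (Fin n) := by
    simp [finrank_euclideanSpace]
  have horth : Orthonormal ℝ
      (Set.restrict ({(⟨0, hn⟩ : Fin n)} : Set (Fin n)) (fun _ => u)) := by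
    constructor
    · intro i; exact hu
    · intro i j hij
      exact absurd (Subtype.ext (i.2.trans j.2.symm)) hij
  obtain ⟨b, hb⟩ := horth.exists_orthonormalBasis_extension_of_card_eq card
  exact ⟨b, hb _ rfl⟩

lemma key_ineq (hn : 0 < n) (B : EuclideanSpace ℝ (Fin n) →L[ℝ] EuclideanSpace ℝ (Fin n) →L[ℝ] ℝ)
    (hB : ∀ v, B v v ≤ 0) (p : EuclideanSpace ℝ (Fin n)) :
    ∑ i, B (EuclideanSpace.single i (1:ℝ)) (EuclideanSpace.single i (1:ℝ))
      - (B p p) / (1 + ‖p‖ ^ 2) ≤ 0 := by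
  have htr := trace_eq_onb B
  rcases eq_or_ne p 0 with hp | hp
  · subst hp
    have h0 : (B (0:EuclideanSpace ℝ (Fin n))) (0:EuclideanSpace ℝ (Fin n)) = 0 := by
      simp
    rw [h0]
    have : (0:ℝ) / (1 + ‖(0:EuclideanSpace ℝ (Fin n))‖ ^ 2) = 0 := by simp
    rw [this, sub_zero]
    exact Finset.sum_nonpos fun i _ => hB _
  · set u : EuclideanSpace ℝ (Fin n) := ‖p‖⁻¹ • p with hudef
    have hpn : 0 < ‖p‖ := norm_pos_iff.2 hp
    have hu : ‖u‖ = 1 := norm_smul_inv_norm hp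
    obtain ⟨b, hb⟩ := exists_onb_with hn hu
    have hsplit : ∑ k, B (b k) (b k)
        = B u u + ∑ k ∈ Finset.univ.erase (⟨0, hn⟩ : Fin n), B (b k) (b k) := by
      rw [← Finset.add_sum_erase _ _ (Finset.mem_univ (⟨0, hn⟩ : Fin n)), hb]
    have h2 : ∑ k ∈ Finset.univ.erase (⟨0, hn⟩ : Fin n), B (b k) (b k) ≤ 0 :=
      Finset.sum_nonpos fun k _ => hB _
    have huu : B u u = B p p / ‖p‖ ^ 2 := by
      simp only [hudef, map_smul, ContinuousLinearMap.smul_apply, smul_eq_mul]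
      rw [eq_div_iff (by positivity)]
      rw [show ‖p‖⁻¹ * (‖p‖⁻¹ * (B p) p) * ‖p‖ ^ 2
          = (‖p‖ * ‖p‖⁻¹) ^ 2 * (B p) p by ring, mul_inv_cancel₀ hpn.ne', one_pow, one_mul]
    have hfinal : B p p / ‖p‖ ^ 2 ≤ B p p / (1 + ‖p‖ ^ 2) := by
      rw [div_le_div_iff₀ (by positivity) (by positivity)]
      nlinarith [hB p, sq_nonneg ‖p‖]
    have := htr b
    linarith
lemma pd2_eq_bilin {n : ℕ} {U : Set (EuclideanSpace ℝ (Fin n))} (hU : IsOpen U)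
    {h : EuclideanSpace ℝ (Fin n) → ℝ} (hh : ContDiffOn ℝ (⊤:ℕ∞) h U)
    {z : EuclideanSpace ℝ (Fin n)} (hz : z ∈ U) (i j : Fin n) :
    pd2 n h i j z
      = (fderiv ℝ (fderiv ℝ h) z (EuclideanSpace.single j 1)) (EuclideanSpace.single i 1) := by
  have h1 := (hasFDerivAt_fderiv_apply hU hh hz (EuclideanSpace.single i 1)).fderiv
  show fderiv ℝ (pd n h i) z (EuclideanSpace.single j 1) = _
  have hpd : pd n h i = fun x => fderiv ℝ h x (EuclideanSpace.single i 1) := rfl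
  rw [hpd, h1]
  rfl

lemma pd_sub {n : ℕ} {U₁ U₂ : Set (EuclideanSpace ℝ (Fin n))}
    (hU₁ : IsOpen U₁) (hU₂ : IsOpen U₂) {f₁ f₂ : EuclideanSpace ℝ (Fin n) → ℝ}
    (h₁ : ContDiffOn ℝ (⊤:ℕ∞) f₁ U₁) (h₂ : ContDiffOn ℝ (⊤:ℕ∞) f₂ U₂)
    {x : EuclideanSpace ℝ (Fin n)} (hx₁ : x ∈ U₁) (hx₂ : x ∈ U₂) (i : Fin n) :
    pd n (fun y => f₁ y - f₂ y) i x = pd n f₁ i x - pd n f₂ i x := by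
  have d₁ : DifferentiableAt ℝ f₁ x :=
    (h₁.contDiffAt (hU₁.mem_nhds hx₁)).differentiableAt (by simp)
  have d₂ : DifferentiableAt ℝ f₂ x :=
    (h₂.contDiffAt (hU₂.mem_nhds hx₂)).differentiableAt (by simp)
  unfold pd
  rw [fderiv_fun_sub d₁ d₂]
  rfl

lemma pd2_sub {n : ℕ} {U₁ U₂ : Set (EuclideanSpace ℝ (Fin n))}
    (hU₁ : IsOpen U₁) (hU₂ : IsOpen U₂) {f₁ f₂ : EuclideanSpace ℝ (Fin n) → ℝ}
    (h₁ : ContDiffOn ℝ (⊤:ℕ∞) f₁ U₁) (h₂ : ContDiffOn ℝ (⊤:ℕ∞) f₂ U₂)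
    {z : EuclideanSpace ℝ (Fin n)} (hz₁ : z ∈ U₁) (hz₂ : z ∈ U₂) (i j : Fin n) :
    pd2 n (fun y => f₁ y - f₂ y) i j z = pd2 n f₁ i j z - pd2 n f₂ i j z := by
  have hev : pd n (fun y => f₁ y - f₂ y) i =ᶠ[𝓝 z]
      fun x => pd n f₁ i x - pd n f₂ i x := by
    filter_upwards [hU₁.mem_nhds hz₁, hU₂.mem_nhds hz₂] with x hx₁ hx₂
    exact pd_sub hU₁ hU₂ h₁ h₂ hx₁ hx₂ i
  have d₁ : DifferentiableAt ℝ (pd n f₁ i) z :=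
    (hasFDerivAt_fderiv_apply hU₁ h₁ hz₁ (EuclideanSpace.single i 1)).differentiableAt
  have d₂ : DifferentiableAt ℝ (pd n f₂ i) z :=
    (hasFDerivAt_fderiv_apply hU₂ h₂ hz₂ (EuclideanSpace.single i 1)).differentiableAt
  show fderiv ℝ (pd n (fun y => f₁ y - f₂ y) i) z (EuclideanSpace.single j 1) = _
  rw [hev.fderiv_eq, fderiv_fun_sub d₁ d₂]
  rfl
/-- If the bounded convex domain `Ω` is contained in an open cone `V`
with vertex `x₀ ∈ ∂Ω` whose translate `V − x₀` lies (after a rotation) in a wedge of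
opening angle `μπ < π`, then the solution `f` in `Ω` is dominated by the solution `f_V`
in the cone; in particular, writing `f_V(x) = |x−x₀| g_V((x−x₀)/|x−x₀|)`, one gets
`f(x) ≤ |x−x₀| g_V((x−x₀)/|x−x₀|)` on `Ω`. -/
theorem stmt17 (n : ℕ) (hn : 2 ≤ n) (Ω : Set (EuclideanSpace ℝ (Fin n)))
    (hΩo : IsOpen Ω) (hΩb : Bornology.IsBounded Ω) (hΩc : Convex ℝ Ω)
    (x₀ : EuclideanSpace ℝ (Fin n)) (hx₀ : x₀ ∈ frontier Ω)
    (V : Set (EuclideanSpace ℝ (Fin n))) (hVo : IsOpen V) (hΩV : Ω ⊆ V)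
    -- `V` is a cone with vertex `x₀`:
    (hVcone : ∀ l : ℝ, 0 < l → ∀ x, x₀ + l • (x - x₀) ∈ V ↔ x ∈ V)
    (μ : ℝ) (hμ : μ ∈ Set.Ioo (0:ℝ) 1)
    -- after a rotation, `V − x₀` is contained in the wedge of angle `μπ`:
    (e : EuclideanSpace ℝ (Fin n) ≃ₗᵢ[ℝ] EuclideanSpace ℝ (Fin n))
    (hVwedge : (fun x => e (x - x₀)) '' V ⊆ wedge n hn μ)
    (f fV : EuclideanSpace ℝ (Fin n) → ℝ)
    (hf : IsMinSol n Ω f) (hfV : IsMinSol n V fV)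
    -- `f_V` is homogeneous of degree one about `x₀`:
    (gV : EuclideanSpace ℝ (Fin n) → ℝ)
    (hgV : ∀ x ∈ V, fV x = ‖x - x₀‖ * gV (‖x - x₀‖⁻¹ • (x - x₀))) :
    ∀ x ∈ Ω, f x ≤ fV x ∧ f x ≤ ‖x - x₀‖ * gV (‖x - x₀‖⁻¹ • (x - x₀)) := by
  obtain ⟨hfc, hfsm, hfpos, hfbd, hfeq⟩ := hf
  obtain ⟨hVc, hVsm, hVpos, hVbd, hVeq⟩ := hfV
  have hn0 : 0 < n := by omega
  have hclΩV : closure Ω ⊆ closure V := closure_mono hΩV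
  have hfVnonneg : ∀ x ∈ closure Ω, 0 ≤ fV x := fun x hx =>
    le_on_closure (f := fun _ => (0:ℝ)) (g := fV) (fun y hy => (hVpos y hy).le)
      continuousOn_const hVc (hclΩV hx)
  -- the key comparison on the closure of Ω
  have key : ∀ x ∈ closure Ω, f x - fV x ≤ 0 := by
    set h : EuclideanSpace ℝ (Fin n) → ℝ := fun y => f y - fV y with hdef
    have hcont : ContinuousOn h (closure Ω) := hfc.sub (hVc.mono hclΩV)
    have hcomp : IsCompact (closure Ω) := hΩb.isCompact_closure
    have hne : (closure Ω).Nonempty := ⟨x₀, frontier_subset_closure hx₀⟩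
    obtain ⟨z, hzcl, hzmax⟩ := hcomp.exists_isMaxOn hne hcont
    have hz0 : h z ≤ 0 := by
      by_contra hpos
      push_neg at hpos
      have hzΩ : z ∈ Ω := by
        by_contra hzno
        have hzfr : z ∈ frontier Ω := by
          rw [hΩo.frontier_eq]; exact ⟨hzcl, hzno⟩
        have h1 : f z = 0 := hfbd z hzfr
        have h2 : 0 ≤ fV z := hfVnonneg z hzcl
        have : h z = f z - fV z := rfl
        linarith [this ▸ hpos]
      have hzV : z ∈ V := hΩV hzΩ
      have hlm : IsLocalMax h z :=
        hzmax.isLocalMax (mem_of_superset (hΩo.mem_nhds hzΩ) subset_closure)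
      have hhsm : ContDiffOn ℝ (⊤:ℕ∞) h Ω := hfsm.sub (hVsm.mono hΩV)
      set B := fderiv ℝ (fderiv ℝ h) z with hBdef
      have hQ : ∀ v, (B v) v ≤ 0 := fun v => hess_nonpos hΩo hhsm hzΩ hlm v
      -- gradients agree at z
      have hdf : DifferentiableAt ℝ f z :=
        (hfsm.contDiffAt (hΩo.mem_nhds hzΩ)).differentiableAt (by simp)
      have hdV : DifferentiableAt ℝ fV z :=
        (hVsm.contDiffAt (hVo.mem_nhds hzV)).differentiableAt (by simp)
      have hgrad0 : fderiv ℝ h z = 0 := hlm.fderiv_eq_zero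
      have hsubz : fderiv ℝ h z = fderiv ℝ f z - fderiv ℝ fV z := fderiv_sub hdf hdV
      have hgeq : ∀ i, pd n fV i z = pd n f i z := by
        intro i
        have h0 : (fderiv ℝ f z - fderiv ℝ fV z) (EuclideanSpace.single i 1) = 0 := by
          rw [← hsubz, hgrad0]; simp
        rw [ContinuousLinearMap.sub_apply] at h0
        unfold pd
        linarith
      -- second derivatives
      have hpd2 : ∀ i j : Fin n, pd2 n f i j z - pd2 n fV i j z
          = (B (EuclideanSpace.single j 1)) (EuclideanSpace.single i 1) := by
        intro i j
        rw [← pd2_sub hΩo hVo hfsm hVsm hzΩ hzV i j]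
        exact pd2_eq_bilin hΩo hhsm hzΩ i j
      -- the gradient vector
      set p : EuclideanSpace ℝ (Fin n) :=
        (WithLp.equiv 2 (Fin n → ℝ)).symm (fun i => pd n f i z) with hpdef
      have hp : ∀ i, p i = pd n f i z := fun i => rfl
      have hS : (∑ i, (pd n f i z)^2) = ‖p‖^2 := by
        rw [EuclideanSpace.norm_eq p, Real.sq_sqrt (by positivity)]
        exact Finset.sum_congr rfl fun i _ => by
          rw [hp i, Real.norm_eq_abs, sq_abs]
      have hC : (∑ i, ∑ j, pd n f i z * pd n f j z * (pd2 n f i j z - pd2 n fV i j z))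
          = (B p) p := by
        rw [bilin_expand B p p, Finset.sum_comm]
        refine Finset.sum_congr rfl fun j _ => Finset.sum_congr rfl fun i _ => ?_
        rw [hpd2 i j, hp i, hp j]
        ring
      have htr : (∑ i, (pd2 n f i i z - pd2 n fV i i z))
          = ∑ i, (B (EuclideanSpace.single i 1)) (EuclideanSpace.single i 1) :=
        Finset.sum_congr rfl fun i _ => hpd2 i i
      -- the PDEs
      have e1 := hfeq z hzΩ
      have e2 := hVeq z hzV
      rw [MinGraphEq] at e1 e2
      simp only [hgeq] at e2
      -- abbreviations
      have hkey := key_ineq hn0 B hQ p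
      rw [← htr, ← hC, ← hS] at hkey
      have hsum1 : (∑ i, (pd2 n f i i z - pd2 n fV i i z))
          = (∑ i, pd2 n f i i z) - ∑ i, pd2 n fV i i z := Finset.sum_sub_distrib _ _
      have hsum2 : (∑ i, ∑ j, pd n f i z * pd n f j z * (pd2 n f i j z - pd2 n fV i j z))
          = (∑ i, ∑ j, pd n f i z * pd n f j z * pd2 n f i j z)
            - ∑ i, ∑ j, pd n f i z * pd n f j z * pd2 n fV i j z := by
        rw [← Finset.sum_sub_distrib]
        refine Finset.sum_congr rfl fun i _ => ?_
        rw [← Finset.sum_sub_distrib]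
        exact Finset.sum_congr rfl fun j _ => by ring
      rw [hsum1, hsum2, sub_div] at hkey
      -- the crucial strict inequality
      have hfVz : 0 < fV z := hVpos z hzV
      have hfz : fV z < f z := by
        have : h z = f z - fV z := rfl
        linarith [this ▸ hpos]
      have hq : (n:ℝ) / f z < (n:ℝ) / fV z :=
        div_lt_div_of_pos_left (by exact_mod_cast hn0) hfVz hfz
      linarith
    intro x hx
    exact (hzmax hx).trans hz0
  intro x hx
  have h1 : f x ≤ fV x := by linarith [key x (subset_closure hx)]
  exact ⟨h1, by rw [← hgV x (hΩV hx)]; exact h1⟩
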